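/- Let C be a concrete pointed monoidal category and T a monad on C equipped with natural maps χ_{A,B} : TA ⊗ TB → T(A ⊗ B) satisfying all the coherence laws of a monoidal monad except possibly the associativity coherence law. Then χ automatically satisfies the associativity coherence law, and hence (T, χ) is a monoidal (commutative) monad. In particular, χ equals the derived strength μ_{A⊗B} ∘ T(θ_{A,B}) ∘ ϑ_{A,TB}, where θ and ϑ are the left and right strengths θ_{A,B} = χ_{A,B}(η_A ⊗ 1_{TB}) and ϑ_{A,B} = χ_{A,B}(1_{TA} ⊗ η_B). -/

import Mathlib

open CategoryTheory MonoidalCategory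

set_option maxHeartbeats 2000000

universe v₁ u₁

/-- In a concrete pointed monoidal category, a monad `T` with natural maps
`χ_{A,B} : TA ⊗ TB ⟶ T(A ⊗ B)` satisfying all the coherence laws of a monoidal monad
except possibly associativity automatically satisfies the associativity coherence law,
and `χ` equals the strength derived from the left and right strengths
`θ_{A,B} = χ_{A,B}(η_A ⊗ 1)` and `ϑ_{A,B} = χ_{A,B}(1 ⊗ η_B)`. -/
theorem monoidal_monad_assoc_automatic
    {C : Type u₁} [Category.{v₁} C] [MonoidalCategory C]
    -- concrete pointed monoidal category
    (hterm : Limits.IsTerminal (𝟙_ C))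
    (hfaith : ∀ {X Y : C} (f g : X ⟶ Y), (∀ h : 𝟙_ C ⟶ X, h ≫ f = h ≫ g) → f = g)
    (hstrong : ∀ X Y : C, Function.Bijective
      (fun p : (𝟙_ C ⟶ X) × (𝟙_ C ⟶ Y) => (λ_ (𝟙_ C)).inv ≫ tensorHom p.1 p.2))
    (T : Monad C)
    (χ : ∀ A B : C, T.obj A ⊗ T.obj B ⟶ T.obj (A ⊗ B))
    -- naturality
    (hnat : ∀ {A A' B B' : C} (f : A ⟶ A') (g : B ⟶ B'),
      tensorHom (T.map f) (T.map g) ≫ χ A' B' = χ A B ≫ T.map (tensorHom f g))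
    -- lax unitality laws (with lax unit `η_{𝟙}`)
    (hleft : ∀ A : C, (λ_ (T.obj A)).hom =
      tensorHom (T.η.app (𝟙_ C)) (𝟙 (T.obj A)) ≫ χ (𝟙_ C) A ≫ T.map (λ_ A).hom)
    (hright : ∀ A : C, (ρ_ (T.obj A)).hom =
      tensorHom (𝟙 (T.obj A)) (T.η.app (𝟙_ C)) ≫ χ A (𝟙_ C) ≫ T.map (ρ_ A).hom)
    -- the unit of the monad is a monoidal natural transformation
    (hη : ∀ A B : C, T.η.app (A ⊗ B) = tensorHom (T.η.app A) (T.η.app B) ≫ χ A B)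
    -- the multiplication of the monad is a monoidal natural transformation
    (hμ : ∀ A B : C, tensorHom (T.μ.app A) (T.μ.app B) ≫ χ A B =
      χ (T.obj A) (T.obj B) ≫ T.map (χ A B) ≫ T.μ.app (A ⊗ B)) :
    -- the associativity coherence law holds
    (∀ A B X : C,
      tensorHom (χ A B) (𝟙 (T.obj X)) ≫ χ (A ⊗ B) X ≫ T.map (α_ A B X).hom =
        (α_ (T.obj A) (T.obj B) (T.obj X)).hom ≫
          tensorHom (𝟙 (T.obj A)) (χ B X) ≫ χ A (B ⊗ X)) ∧
    -- and `χ` is the strength derived from the left and right strengths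
    (∀ A B : C,
      χ A B = tensorHom (𝟙 (T.obj A)) (T.η.app (T.obj B)) ≫ χ A (T.obj B) ≫
        T.map (tensorHom (T.η.app A) (𝟙 (T.obj B)) ≫ χ A B) ≫ T.μ.app (A ⊗ B)) := by
  -- convenient naturality forms
  have ηnat : ∀ {X Y : C} (f : X ⟶ Y), f ≫ T.η.app Y = T.η.app X ≫ T.map f := by
    intro X Y f; simpa using (T.η.naturality f)
  have μnat : ∀ {X Y : C} (f : X ⟶ Y),
      T.μ.app X ≫ T.map f = T.map (T.map f) ≫ T.μ.app Y := by
    intro X Y f; simpa using (T.μ.naturality f).symm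
  -- Lemma L : χ composed with an arbitrary map into the second T-argument
  have lemL : ∀ (A B Z : C) (b : Z ⟶ T.obj B),
      (𝟙 (T.obj A) ⊗ₘ b) ≫ χ A B =
        (𝟙 (T.obj A) ⊗ₘ T.η.app Z) ≫ χ A Z ≫
          T.map ((𝟙 A ⊗ₘ b) ≫ (T.η.app A ⊗ₘ 𝟙 (T.obj B)) ≫ χ A B) ≫ T.μ.app (A ⊗ B) := by
    intro A B Z b
    have h1 : (𝟙 (T.obj A) ⊗ₘ b)
        = (T.map (T.η.app A) ⊗ₘ (b ≫ T.η.app (T.obj B))) ≫ (T.μ.app A ⊗ₘ T.μ.app B) := by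
      rw [tensorHom_comp_tensorHom, Category.assoc, T.right_unit, T.left_unit]
      simp
    have h2 : (T.η.app A ⊗ₘ b) = (𝟙 A ⊗ₘ b) ≫ (T.η.app A ⊗ₘ 𝟙 (T.obj B)) := by
      rw [tensorHom_comp_tensorHom, Category.id_comp, Category.comp_id]
    calc (𝟙 (T.obj A) ⊗ₘ b) ≫ χ A B
        = (T.map (T.η.app A) ⊗ₘ (b ≫ T.η.app (T.obj B))) ≫
            ((T.μ.app A ⊗ₘ T.μ.app B) ≫ χ A B) := by
          rw [h1, Category.assoc]
      _ = (T.map (T.η.app A) ⊗ₘ (T.η.app Z ≫ T.map b)) ≫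
            (χ (T.obj A) (T.obj B) ≫ T.map (χ A B) ≫ T.μ.app (A ⊗ B)) := by
          rw [hμ, ηnat]
      _ = (𝟙 (T.obj A) ⊗ₘ T.η.app Z) ≫ ((T.map (T.η.app A) ⊗ₘ T.map b) ≫
            χ (T.obj A) (T.obj B)) ≫ T.map (χ A B) ≫ T.μ.app (A ⊗ B) := by
          rw [show (T.map (T.η.app A) ⊗ₘ (T.η.app Z ≫ T.map b))
              = (𝟙 (T.obj A) ⊗ₘ T.η.app Z) ≫ (T.map (T.η.app A) ⊗ₘ T.map b) by
            rw [tensorHom_comp_tensorHom, Category.id_comp]]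
          simp only [Category.assoc]
      _ = (𝟙 (T.obj A) ⊗ₘ T.η.app Z) ≫ (χ A Z ≫ T.map (T.η.app A ⊗ₘ b)) ≫
            T.map (χ A B) ≫ T.μ.app (A ⊗ B) := by rw [hnat]
      _ = (𝟙 (T.obj A) ⊗ₘ T.η.app Z) ≫ χ A Z ≫
          T.map ((𝟙 A ⊗ₘ b) ≫ (T.η.app A ⊗ₘ 𝟙 (T.obj B)) ≫ χ A B) ≫ T.μ.app (A ⊗ B) := by
          rw [h2]
          simp only [Functor.map_comp, Category.assoc]
  -- second claim
  have claim2 : ∀ A B : C,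
      χ A B = (𝟙 (T.obj A) ⊗ₘ T.η.app (T.obj B)) ≫ χ A (T.obj B) ≫
        T.map ((T.η.app A ⊗ₘ 𝟙 (T.obj B)) ≫ χ A B) ≫ T.μ.app (A ⊗ B) := by
    intro A B
    have := lemL A B (T.obj B) (𝟙 (T.obj B))
    simpa using this
  -- hleft / hright in composable form
  have hl' : ∀ B : C, (T.η.app (𝟙_ C) ⊗ₘ 𝟙 (T.obj B)) ≫ χ (𝟙_ C) B
      = (λ_ (T.obj B)).hom ≫ T.map (λ_ B).inv := by
    intro B
    rw [hleft B]
    simp only [Category.assoc, ← Functor.map_comp, Iso.hom_inv_id]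
    simp
  have hr' : ∀ A : C, (𝟙 (T.obj A) ⊗ₘ T.η.app (𝟙_ C)) ≫ χ A (𝟙_ C)
      = (ρ_ (T.obj A)).hom ≫ T.map (ρ_ A).inv := by
    intro A
    rw [hright A]
    simp only [Category.assoc, ← Functor.map_comp, Iso.hom_inv_id]
    simp
  -- point formula for the left strength θ
  have Pθ : ∀ (A B : C) (x : 𝟙_ C ⟶ A) (w : 𝟙_ C ⟶ T.obj B),
      (λ_ (𝟙_ C)).inv ≫ (x ⊗ₘ w) ≫ (T.η.app A ⊗ₘ 𝟙 (T.obj B)) ≫ χ A B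
        = w ≫ T.map ((λ_ B).inv ≫ (x ⊗ₘ 𝟙 B)) := by
    intro A B x w
    have e1 : (x ⊗ₘ w) ≫ (T.η.app A ⊗ₘ 𝟙 (T.obj B))
        = (𝟙 (𝟙_ C) ⊗ₘ w) ≫ (T.η.app (𝟙_ C) ⊗ₘ 𝟙 (T.obj B)) ≫ (T.map x ⊗ₘ T.map (𝟙 B)) := by
      rw [tensorHom_comp_tensorHom, tensorHom_comp_tensorHom, tensorHom_comp_tensorHom, ηnat]
      simp
    have e2 : (𝟙 (𝟙_ C) ⊗ₘ w) ≫ (λ_ (T.obj B)).hom = (λ_ (𝟙_ C)).hom ≫ w := by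
      simpa [id_tensorHom] using leftUnitor_naturality w
    calc (λ_ (𝟙_ C)).inv ≫ (x ⊗ₘ w) ≫ (T.η.app A ⊗ₘ 𝟙 (T.obj B)) ≫ χ A B
        = (λ_ (𝟙_ C)).inv ≫ (𝟙 (𝟙_ C) ⊗ₘ w) ≫ ((T.η.app (𝟙_ C) ⊗ₘ 𝟙 (T.obj B)) ≫
            χ (𝟙_ C) B) ≫ T.map (x ⊗ₘ 𝟙 B) := by
          rw [← Category.assoc (x ⊗ₘ w), e1]
          simp only [Category.assoc]
          rw [hnat]
      _ = (λ_ (𝟙_ C)).inv ≫ ((𝟙 (𝟙_ C) ⊗ₘ w) ≫ (λ_ (T.obj B)).hom) ≫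
            T.map (λ_ B).inv ≫ T.map (x ⊗ₘ 𝟙 B) := by
          rw [hl']
          simp only [Category.assoc]
      _ = w ≫ T.map ((λ_ B).inv ≫ (x ⊗ₘ 𝟙 B)) := by
          rw [e2]; simp
  -- point formula for χ
  have Pχ : ∀ (A B : C) (a : 𝟙_ C ⟶ T.obj A) (b : 𝟙_ C ⟶ T.obj B),
      (λ_ (𝟙_ C)).inv ≫ (a ⊗ₘ b) ≫ χ A B
        = a ≫ T.map ((ρ_ A).inv ≫ (𝟙 A ⊗ₘ b) ≫ (T.η.app A ⊗ₘ 𝟙 (T.obj B)) ≫ χ A B) ≫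
            T.μ.app (A ⊗ B) := by
    intro A B a b
    have split : (a ⊗ₘ b) = (a ⊗ₘ 𝟙 (𝟙_ C)) ≫ (𝟙 (T.obj A) ⊗ₘ b) := by
      rw [tensorHom_comp_tensorHom]; simp
    have e3 : (λ_ (𝟙_ C)).inv ≫ (a ⊗ₘ 𝟙 (𝟙_ C)) ≫ (ρ_ (T.obj A)).hom = a := by
      have := rightUnitor_naturality a
      rw [← tensorHom_id] at this
      rw [this, ← unitors_equal, Iso.inv_hom_id_assoc]
    calc (λ_ (𝟙_ C)).inv ≫ (a ⊗ₘ b) ≫ χ A B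
        = (λ_ (𝟙_ C)).inv ≫ (a ⊗ₘ 𝟙 (𝟙_ C)) ≫ ((𝟙 (T.obj A) ⊗ₘ b) ≫ χ A B) := by
          rw [split]; simp only [Category.assoc]
      _ = (λ_ (𝟙_ C)).inv ≫ (a ⊗ₘ 𝟙 (𝟙_ C)) ≫ ((𝟙 (T.obj A) ⊗ₘ T.η.app (𝟙_ C)) ≫ χ A (𝟙_ C)) ≫
            T.map ((𝟙 A ⊗ₘ b) ≫ (T.η.app A ⊗ₘ 𝟙 (T.obj B)) ≫ χ A B) ≫ T.μ.app (A ⊗ B) := by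
          rw [lemL A B (𝟙_ C) b]; simp only [Category.assoc]
      _ = ((λ_ (𝟙_ C)).inv ≫ (a ⊗ₘ 𝟙 (𝟙_ C)) ≫ (ρ_ (T.obj A)).hom) ≫ T.map (ρ_ A).inv ≫
            T.map ((𝟙 A ⊗ₘ b) ≫ (T.η.app A ⊗ₘ 𝟙 (T.obj B)) ≫ χ A B) ≫ T.μ.app (A ⊗ B) := by
          rw [hr']; simp only [Category.assoc]
      _ = a ≫ T.map ((ρ_ A).inv ≫ (𝟙 A ⊗ₘ b) ≫ (T.η.app A ⊗ₘ 𝟙 (T.obj B)) ≫ χ A B) ≫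
            T.μ.app (A ⊗ B) := by
          rw [e3]
          simp only [Functor.map_comp, Category.assoc]
  -- naturality of the left strength in its first variable
  have θnat : ∀ {A A' : C} (B : C) (f : A ⟶ A'),
      (f ⊗ₘ 𝟙 (T.obj B)) ≫ (T.η.app A' ⊗ₘ 𝟙 (T.obj B)) ≫ χ A' B
        = (T.η.app A ⊗ₘ 𝟙 (T.obj B)) ≫ χ A B ≫ T.map (f ⊗ₘ 𝟙 B) := by
    intro A A' B f
    have e : (f ⊗ₘ 𝟙 (T.obj B)) ≫ (T.η.app A' ⊗ₘ 𝟙 (T.obj B))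
        = (T.η.app A ⊗ₘ 𝟙 (T.obj B)) ≫ (T.map f ⊗ₘ T.map (𝟙 B)) := by
      rw [tensorHom_comp_tensorHom, tensorHom_comp_tensorHom, ηnat]; simp
    rw [← Category.assoc (f ⊗ₘ 𝟙 (T.obj B)), e, Category.assoc, hnat]
  -- separation on tensor products
  have ext2 : ∀ {U V Z : C} (f g : U ⊗ V ⟶ Z),
      (∀ (u : 𝟙_ C ⟶ U) (v : 𝟙_ C ⟶ V),
        (λ_ (𝟙_ C)).inv ≫ (u ⊗ₘ v) ≫ f = (λ_ (𝟙_ C)).inv ≫ (u ⊗ₘ v) ≫ g) → f = g := by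
    intro U V Z f g H
    apply hfaith
    intro h
    obtain ⟨⟨u, v⟩, hp⟩ := (hstrong U V).2 h
    dsimp at hp
    rw [← hp, Category.assoc, Category.assoc]
    exact H u v
  -- assemble
  refine ⟨?_, claim2⟩
  intro A B X
  have lre : (λ_ (𝟙_ C)).inv = (ρ_ (𝟙_ C)).inv := by
    rw [Iso.inv_eq_inv]; exact unitors_equal
  have coh1 : ((λ_ (𝟙_ C)).inv ⊗ₘ 𝟙 (𝟙_ C)) ≫ (α_ (𝟙_ C) (𝟙_ C) (𝟙_ C)).hom
      = (𝟙 (𝟙_ C) ⊗ₘ (λ_ (𝟙_ C)).inv) := by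
    monoidal_coherence
  have coh2 : ((λ_ B).inv ⊗ₘ 𝟙 X) ≫ (α_ (𝟙_ C) B X).hom = (λ_ (B ⊗ X)).inv := by
    monoidal_coherence
  -- evaluating `ρ⁻¹ ≫ (𝟙 ⊗ₘ w)` at a point
  have za : ∀ {P Q : C} (z : 𝟙_ C ⟶ P) (w : 𝟙_ C ⟶ Q),
      z ≫ (ρ_ P).inv ≫ (𝟙 P ⊗ₘ w) = (λ_ (𝟙_ C)).inv ≫ (z ⊗ₘ w) := by
    intro P Q z w
    have h1 : z ≫ (ρ_ P).inv = (ρ_ (𝟙_ C)).inv ≫ (z ⊗ₘ 𝟙 (𝟙_ C)) := by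
      simpa [tensorHom_id] using rightUnitor_inv_naturality (f := z)
    rw [reassoc_of% h1, ← lre]
    simp only [Category.assoc, tensorHom_comp_tensorHom]
    simp
  -- the central pointwise computation
  have mlem : ∀ (x : 𝟙_ C ⟶ T.obj X) (z : 𝟙_ C ⟶ A),
      (λ_ B).inv ≫ (z ⊗ₘ 𝟙 B) ≫ (ρ_ (A ⊗ B)).inv ≫ (𝟙 (A ⊗ B) ⊗ₘ x) ≫
          (T.η.app (A ⊗ B) ⊗ₘ 𝟙 (T.obj X)) ≫ χ (A ⊗ B) X ≫ T.map (α_ A B X).hom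
        = ((ρ_ B).inv ≫ (𝟙 B ⊗ₘ x) ≫ (T.η.app B ⊗ₘ 𝟙 (T.obj X)) ≫ χ B X) ≫
            T.map ((λ_ (B ⊗ X)).inv ≫ (z ⊗ₘ 𝟙 (B ⊗ X))) := by
    intro x z
    have p1 : (z ⊗ₘ 𝟙 B) ≫ (ρ_ (A ⊗ B)).inv
        = (ρ_ (𝟙_ C ⊗ B)).inv ≫ ((z ⊗ₘ 𝟙 B) ⊗ₘ 𝟙 (𝟙_ C)) := by
      simpa [tensorHom_id] using rightUnitor_inv_naturality (f := (z ⊗ₘ 𝟙 B))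
    have p2 : ((z ⊗ₘ 𝟙 B) ⊗ₘ 𝟙 (𝟙_ C)) ≫ (𝟙 (A ⊗ B) ⊗ₘ x)
        = (𝟙 (𝟙_ C ⊗ B) ⊗ₘ x) ≫ ((z ⊗ₘ 𝟙 B) ⊗ₘ 𝟙 (T.obj X)) := by
      rw [tensorHom_comp_tensorHom, tensorHom_comp_tensorHom]; simp
    have p4 : (T.η.app (𝟙_ C ⊗ B) ⊗ₘ 𝟙 (T.obj X)) ≫ χ (𝟙_ C ⊗ B) X
        = ((λ_ B).hom ⊗ₘ 𝟙 (T.obj X)) ≫ (T.η.app B ⊗ₘ 𝟙 (T.obj X)) ≫ χ B X ≫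
            T.map ((λ_ B).inv ⊗ₘ 𝟙 X) := by
      rw [← θnat X (λ_ B).inv, ← Category.assoc, tensorHom_comp_tensorHom]
      simp
    have p5a : (𝟙 (𝟙_ C ⊗ B) ⊗ₘ x) ≫ ((λ_ B).hom ⊗ₘ 𝟙 (T.obj X))
        = ((λ_ B).hom ⊗ₘ 𝟙 (𝟙_ C)) ≫ (𝟙 B ⊗ₘ x) := by
      rw [tensorHom_comp_tensorHom, tensorHom_comp_tensorHom]; simp
    have p5b : (ρ_ (𝟙_ C ⊗ B)).inv ≫ ((λ_ B).hom ⊗ₘ 𝟙 (𝟙_ C))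
        = (λ_ B).hom ≫ (ρ_ B).inv := by
      have := rightUnitor_inv_naturality (f := (λ_ B).hom)
      rw [tensorHom_id]
      exact this.symm
    have p6 : ((λ_ B).inv ⊗ₘ 𝟙 X) ≫ ((z ⊗ₘ 𝟙 B) ⊗ₘ 𝟙 X) ≫ (α_ A B X).hom
        = (λ_ (B ⊗ X)).inv ≫ (z ⊗ₘ 𝟙 (B ⊗ X)) := by
      rw [associator_naturality z (𝟙 B) (𝟙 X), ← Category.assoc, coh2, id_tensorHom_id]
    calc (λ_ B).inv ≫ (z ⊗ₘ 𝟙 B) ≫ (ρ_ (A ⊗ B)).inv ≫ (𝟙 (A ⊗ B) ⊗ₘ x) ≫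
            (T.η.app (A ⊗ B) ⊗ₘ 𝟙 (T.obj X)) ≫ χ (A ⊗ B) X ≫ T.map (α_ A B X).hom
        = (λ_ B).inv ≫ (ρ_ (𝟙_ C ⊗ B)).inv ≫ (𝟙 (𝟙_ C ⊗ B) ⊗ₘ x) ≫
            (((z ⊗ₘ 𝟙 B) ⊗ₘ 𝟙 (T.obj X)) ≫ (T.η.app (A ⊗ B) ⊗ₘ 𝟙 (T.obj X)) ≫
              χ (A ⊗ B) X) ≫ T.map (α_ A B X).hom := by
          rw [reassoc_of% p1, reassoc_of% p2]
          simp only [Category.assoc]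
      _ = (λ_ B).inv ≫ (ρ_ (𝟙_ C ⊗ B)).inv ≫ (𝟙 (𝟙_ C ⊗ B) ⊗ₘ x) ≫
            ((T.η.app (𝟙_ C ⊗ B) ⊗ₘ 𝟙 (T.obj X)) ≫ χ (𝟙_ C ⊗ B) X) ≫
            T.map ((z ⊗ₘ 𝟙 B) ⊗ₘ 𝟙 X) ≫ T.map (α_ A B X).hom := by
          rw [θnat X (z ⊗ₘ 𝟙 B)]
          simp only [Category.assoc]
      _ = ((λ_ B).inv ≫ (λ_ B).hom) ≫ (ρ_ B).inv ≫ (𝟙 B ⊗ₘ x) ≫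
            (T.η.app B ⊗ₘ 𝟙 (T.obj X)) ≫ χ B X ≫
            T.map ((λ_ B).inv ⊗ₘ 𝟙 X) ≫ T.map ((z ⊗ₘ 𝟙 B) ⊗ₘ 𝟙 X) ≫
            T.map (α_ A B X).hom := by
          rw [p4]
          simp only [Category.assoc]
          rw [reassoc_of% p5a, reassoc_of% p5b]
      _ = (ρ_ B).inv ≫ (𝟙 B ⊗ₘ x) ≫ (T.η.app B ⊗ₘ 𝟙 (T.obj X)) ≫ χ B X ≫
            T.map (((λ_ B).inv ⊗ₘ 𝟙 X) ≫ ((z ⊗ₘ 𝟙 B) ⊗ₘ 𝟙 X) ≫ (α_ A B X).hom) := by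
          rw [Iso.inv_hom_id]
          simp only [Category.id_comp, Functor.map_comp, Category.assoc]
      _ = ((ρ_ B).inv ≫ (𝟙 B ⊗ₘ x) ≫ (T.η.app B ⊗ₘ 𝟙 (T.obj X)) ≫ χ B X) ≫
            T.map ((λ_ (B ⊗ X)).inv ≫ (z ⊗ₘ 𝟙 (B ⊗ X))) := by
          rw [p6]
          simp only [Category.assoc]
  -- extensionality over points of a double tensor product
  apply ext2
  intro u x
  obtain ⟨⟨a, b⟩, hab⟩ := (hstrong (T.obj A) (T.obj B)).2 u
  dsimp at hab
  subst hab
  -- the key morphism-level identity, proved pointwise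
  have keyK :
      ((ρ_ A).inv ≫ (𝟙 A ⊗ₘ b) ≫ (T.η.app A ⊗ₘ 𝟙 (T.obj B)) ≫ χ A B) ≫
        T.map (((ρ_ (A ⊗ B)).inv ≫ (𝟙 (A ⊗ B) ⊗ₘ x) ≫
          (T.η.app (A ⊗ B) ⊗ₘ 𝟙 (T.obj X)) ≫ χ (A ⊗ B) X) ≫ T.map (α_ A B X).hom) ≫
        T.μ.app (A ⊗ (B ⊗ X))
      = (ρ_ A).inv ≫
          (𝟙 A ⊗ₘ (b ≫ T.map ((ρ_ B).inv ≫ (𝟙 B ⊗ₘ x) ≫ (T.η.app B ⊗ₘ 𝟙 (T.obj X)) ≫ χ B X) ≫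
            T.μ.app (B ⊗ X))) ≫
          (T.η.app A ⊗ₘ 𝟙 (T.obj (B ⊗ X))) ≫ χ A (B ⊗ X) := by
    apply hfaith
    intro z
    calc z ≫ (((ρ_ A).inv ≫ (𝟙 A ⊗ₘ b) ≫ (T.η.app A ⊗ₘ 𝟙 (T.obj B)) ≫ χ A B) ≫
            T.map (((ρ_ (A ⊗ B)).inv ≫ (𝟙 (A ⊗ B) ⊗ₘ x) ≫
              (T.η.app (A ⊗ B) ⊗ₘ 𝟙 (T.obj X)) ≫ χ (A ⊗ B) X) ≫ T.map (α_ A B X).hom) ≫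
            T.μ.app (A ⊗ (B ⊗ X)))
        = ((λ_ (𝟙_ C)).inv ≫ (z ⊗ₘ b) ≫ (T.η.app A ⊗ₘ 𝟙 (T.obj B)) ≫ χ A B) ≫
            T.map (((ρ_ (A ⊗ B)).inv ≫ (𝟙 (A ⊗ B) ⊗ₘ x) ≫
              (T.η.app (A ⊗ B) ⊗ₘ 𝟙 (T.obj X)) ≫ χ (A ⊗ B) X) ≫ T.map (α_ A B X).hom) ≫
            T.μ.app (A ⊗ (B ⊗ X)) := by
          simp only [Category.assoc]
          rw [reassoc_of% (za z b)]
      _ = b ≫ T.map ((λ_ B).inv ≫ (z ⊗ₘ 𝟙 B)) ≫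
            T.map (((ρ_ (A ⊗ B)).inv ≫ (𝟙 (A ⊗ B) ⊗ₘ x) ≫
              (T.η.app (A ⊗ B) ⊗ₘ 𝟙 (T.obj X)) ≫ χ (A ⊗ B) X) ≫ T.map (α_ A B X).hom) ≫
            T.μ.app (A ⊗ (B ⊗ X)) := by
          simp only [Category.assoc]
          rw [reassoc_of% (Pθ A B z b)]
      _ = b ≫ T.map ((λ_ B).inv ≫ (z ⊗ₘ 𝟙 B) ≫ (ρ_ (A ⊗ B)).inv ≫ (𝟙 (A ⊗ B) ⊗ₘ x) ≫
              (T.η.app (A ⊗ B) ⊗ₘ 𝟙 (T.obj X)) ≫ χ (A ⊗ B) X ≫ T.map (α_ A B X).hom) ≫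
            T.μ.app (A ⊗ (B ⊗ X)) := by
          simp only [Functor.map_comp, Category.assoc]
      _ = b ≫ T.map (((ρ_ B).inv ≫ (𝟙 B ⊗ₘ x) ≫ (T.η.app B ⊗ₘ 𝟙 (T.obj X)) ≫ χ B X) ≫
              T.map ((λ_ (B ⊗ X)).inv ≫ (z ⊗ₘ 𝟙 (B ⊗ X)))) ≫
            T.μ.app (A ⊗ (B ⊗ X)) := by
          rw [mlem x z]
      _ = b ≫ T.map ((ρ_ B).inv ≫ (𝟙 B ⊗ₘ x) ≫ (T.η.app B ⊗ₘ 𝟙 (T.obj X)) ≫ χ B X) ≫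
            T.μ.app (B ⊗ X) ≫ T.map ((λ_ (B ⊗ X)).inv ≫ (z ⊗ₘ 𝟙 (B ⊗ X))) := by
          rw [Functor.map_comp]
          simp only [Category.assoc]
          rw [← μnat]
      _ = (λ_ (𝟙_ C)).inv ≫ (z ⊗ₘ (b ≫
              T.map ((ρ_ B).inv ≫ (𝟙 B ⊗ₘ x) ≫ (T.η.app B ⊗ₘ 𝟙 (T.obj X)) ≫ χ B X) ≫
              T.μ.app (B ⊗ X))) ≫
            (T.η.app A ⊗ₘ 𝟙 (T.obj (B ⊗ X))) ≫ χ A (B ⊗ X) := by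
          rw [Pθ A (B ⊗ X) z
            (b ≫ T.map ((ρ_ B).inv ≫ (𝟙 B ⊗ₘ x) ≫ (T.η.app B ⊗ₘ 𝟙 (T.obj X)) ≫ χ B X) ≫
              T.μ.app (B ⊗ X))]
          simp only [Category.assoc]
      _ = z ≫ ((ρ_ A).inv ≫
            (𝟙 A ⊗ₘ (b ≫ T.map ((ρ_ B).inv ≫ (𝟙 B ⊗ₘ x) ≫ (T.η.app B ⊗ₘ 𝟙 (T.obj X)) ≫ χ B X) ≫
              T.μ.app (B ⊗ X))) ≫
            (T.η.app A ⊗ₘ 𝟙 (T.obj (B ⊗ X))) ≫ χ A (B ⊗ X)) := by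
          rw [reassoc_of% (za z (b ≫
            T.map ((ρ_ B).inv ≫ (𝟙 B ⊗ₘ x) ≫ (T.η.app B ⊗ₘ 𝟙 (T.obj X)) ≫ χ B X) ≫
              T.μ.app (B ⊗ X)))]
  have μnat' : ∀ {X Y Z : C} (f : X ⟶ Y) (g : T.obj Y ⟶ Z),
      T.μ.app X ≫ T.map f ≫ g = T.map (T.map f) ≫ T.μ.app Y ≫ g := by
    intro X Y Z f g
    rw [← Category.assoc, μnat, Category.assoc]
  -- composite form of keyK
  have keyK' :
      T.map ((ρ_ A).inv ≫ (𝟙 A ⊗ₘ b) ≫ (T.η.app A ⊗ₘ 𝟙 (T.obj B)) ≫ χ A B) ≫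
        T.μ.app (A ⊗ B) ≫
        T.map ((ρ_ (A ⊗ B)).inv ≫ (𝟙 (A ⊗ B) ⊗ₘ x) ≫
          (T.η.app (A ⊗ B) ⊗ₘ 𝟙 (T.obj X)) ≫ χ (A ⊗ B) X) ≫
        T.μ.app ((A ⊗ B) ⊗ X) ≫ T.map (α_ A B X).hom
      = T.map ((ρ_ A).inv ≫
          (𝟙 A ⊗ₘ (b ≫ T.map ((ρ_ B).inv ≫ (𝟙 B ⊗ₘ x) ≫ (T.η.app B ⊗ₘ 𝟙 (T.obj X)) ≫ χ B X) ≫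
            T.μ.app (B ⊗ X))) ≫
          (T.η.app A ⊗ₘ 𝟙 (T.obj (B ⊗ X))) ≫ χ A (B ⊗ X)) ≫ T.μ.app (A ⊗ (B ⊗ X)) := by
    conv_rhs => rw [← keyK]
    simp only [Functor.map_comp, Category.assoc, μnat', μnat]
    rw [← T.assoc]
  -- now the big calc for associativity at the point (a, b, x)
  have e0 : (((λ_ (𝟙_ C)).inv ≫ (a ⊗ₘ b)) ⊗ₘ x) ≫ (χ A B ⊗ₘ 𝟙 (T.obj X))
      = (((λ_ (𝟙_ C)).inv ≫ (a ⊗ₘ b) ≫ χ A B) ⊗ₘ x) := by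
    rw [tensorHom_comp_tensorHom]; simp
  have e3 : (((λ_ (𝟙_ C)).inv ≫ (a ⊗ₘ b)) ⊗ₘ x) ≫ (α_ (T.obj A) (T.obj B) (T.obj X)).hom
      = (a ⊗ₘ ((λ_ (𝟙_ C)).inv ≫ (b ⊗ₘ x))) := by
    rw [show (((λ_ (𝟙_ C)).inv ≫ (a ⊗ₘ b)) ⊗ₘ x)
        = ((λ_ (𝟙_ C)).inv ⊗ₘ 𝟙 (𝟙_ C)) ≫ ((a ⊗ₘ b) ⊗ₘ x) from by rw [tensorHom_comp_tensorHom]; simp]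
    rw [Category.assoc, associator_naturality, reassoc_of% coh1, tensorHom_comp_tensorHom]
    simp
  have e4 : (a ⊗ₘ ((λ_ (𝟙_ C)).inv ≫ (b ⊗ₘ x))) ≫ (𝟙 (T.obj A) ⊗ₘ χ B X)
      = (a ⊗ₘ ((λ_ (𝟙_ C)).inv ≫ (b ⊗ₘ x) ≫ χ B X)) := by
    rw [tensorHom_comp_tensorHom]; simp
  calc (λ_ (𝟙_ C)).inv ≫ (((λ_ (𝟙_ C)).inv ≫ (a ⊗ₘ b)) ⊗ₘ x) ≫
          ((χ A B ⊗ₘ 𝟙 (T.obj X)) ≫ χ (A ⊗ B) X ≫ T.map (α_ A B X).hom)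
      = (λ_ (𝟙_ C)).inv ≫
          (((λ_ (𝟙_ C)).inv ≫ (a ⊗ₘ b) ≫ χ A B) ⊗ₘ x) ≫ χ (A ⊗ B) X ≫
          T.map (α_ A B X).hom := by
        rw [reassoc_of% e0]
    _ = (λ_ (𝟙_ C)).inv ≫
          ((a ≫ T.map ((ρ_ A).inv ≫ (𝟙 A ⊗ₘ b) ≫ (T.η.app A ⊗ₘ 𝟙 (T.obj B)) ≫ χ A B) ≫
            T.μ.app (A ⊗ B)) ⊗ₘ x) ≫ χ (A ⊗ B) X ≫ T.map (α_ A B X).hom := by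
        rw [Pχ A B a b]
    _ = a ≫ T.map ((ρ_ A).inv ≫ (𝟙 A ⊗ₘ b) ≫ (T.η.app A ⊗ₘ 𝟙 (T.obj B)) ≫ χ A B) ≫
          T.μ.app (A ⊗ B) ≫
          T.map ((ρ_ (A ⊗ B)).inv ≫ (𝟙 (A ⊗ B) ⊗ₘ x) ≫
            (T.η.app (A ⊗ B) ⊗ₘ 𝟙 (T.obj X)) ≫ χ (A ⊗ B) X) ≫
          T.μ.app ((A ⊗ B) ⊗ X) ≫ T.map (α_ A B X).hom := by
        rw [reassoc_of% (Pχ (A ⊗ B) X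
          (a ≫ T.map ((ρ_ A).inv ≫ (𝟙 A ⊗ₘ b) ≫ (T.η.app A ⊗ₘ 𝟙 (T.obj B)) ≫ χ A B) ≫
            T.μ.app (A ⊗ B)) x)]
    _ = a ≫ T.map ((ρ_ A).inv ≫
          (𝟙 A ⊗ₘ (b ≫ T.map ((ρ_ B).inv ≫ (𝟙 B ⊗ₘ x) ≫ (T.η.app B ⊗ₘ 𝟙 (T.obj X)) ≫ χ B X) ≫
            T.μ.app (B ⊗ X))) ≫
          (T.η.app A ⊗ₘ 𝟙 (T.obj (B ⊗ X))) ≫ χ A (B ⊗ X)) ≫ T.μ.app (A ⊗ (B ⊗ X)) := by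
        rw [keyK']
    _ = (λ_ (𝟙_ C)).inv ≫ (a ⊗ₘ (b ≫
          T.map ((ρ_ B).inv ≫ (𝟙 B ⊗ₘ x) ≫ (T.η.app B ⊗ₘ 𝟙 (T.obj X)) ≫ χ B X) ≫
          T.μ.app (B ⊗ X))) ≫ χ A (B ⊗ X) := by
        rw [← Pχ A (B ⊗ X) a (b ≫
          T.map ((ρ_ B).inv ≫ (𝟙 B ⊗ₘ x) ≫ (T.η.app B ⊗ₘ 𝟙 (T.obj X)) ≫ χ B X) ≫
          T.μ.app (B ⊗ X))]
    _ = (λ_ (𝟙_ C)).inv ≫ (a ⊗ₘ ((λ_ (𝟙_ C)).inv ≫ (b ⊗ₘ x) ≫ χ B X)) ≫ χ A (B ⊗ X) := by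
        rw [← Pχ B X b x]
    _ = (λ_ (𝟙_ C)).inv ≫ (((λ_ (𝟙_ C)).inv ≫ (a ⊗ₘ b)) ⊗ₘ x) ≫
          ((α_ (T.obj A) (T.obj B) (T.obj X)).hom ≫
            (𝟙 (T.obj A) ⊗ₘ χ B X) ≫ χ A (B ⊗ X)) := by
        rw [reassoc_of% e3, reassoc_of% e4]
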